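/- Let M* ∈ ℝ^{p1×p2} have rank r with SVD M* = U*·Σ·V*^T, where Σ ∈ ℝ^{r×r} is diagonal with positive entries and U*, V* have orthonormal columns; set L* = U*·Σ^{1/2} and R* = V*·Σ^{1/2}. Then for all L ∈ ℝ^{p1×r} and R ∈ ℝ^{p2×r}, writing Δ_L = L − L* and Δ_R = R − R*, one has ‖L·R^T − L*·R*^T‖_F ≤ (1 + (1/2)·max(‖Δ_L·Σ^{-1/2}‖, ‖Δ_R·Σ^{-1/2}‖))·(‖Δ_L·Σ^{1/2}‖_F + ‖Δ_R·Σ^{1/2}‖_F). -/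

import Mathlib

noncomputable section

open scoped BigOperators

namespace HomoPursuit

open Matrix

/-- Squared Frobenius norm of a real matrix. -/
def frobSq {m n : Type*} [Fintype m] [Fintype n] (A : Matrix m n ℝ) : ℝ :=
  ∑ i, ∑ j, (A i j) ^ 2

/-- Frobenius norm of a real matrix. -/
def frob {m n : Type*} [Fintype m] [Fintype n] (A : Matrix m n ℝ) : ℝ :=
  Real.sqrt (frobSq A)

/-- Frobenius inner product `⟨A, B⟩ = tr(Aᵀ B)`. -/
def mdot {m n : Type*} [Fintype m] [Fintype n] (A B : Matrix m n ℝ) : ℝ :=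
  ∑ i, ∑ j, A i j * B i j

/-- The `j`-th largest singular value of a real matrix (1-indexed); `0` if out of range. -/
def sval {m n : Type*} [Fintype m] [Fintype n] [DecidableEq n] (A : Matrix m n ℝ) (j : ℕ) : ℝ :=
  (((Finset.univ.val.map fun i =>
      Real.sqrt ((show (Aᵀ * A).IsHermitian from Matrix.isHermitian_conjTranspose_mul_self A).eigenvalues i)).toList.insertionSort
      (· ≥ ·)).getD (j - 1) 0)

/-- Spectral (operator) norm: the largest singular value. -/
def spec {m n : Type*} [Fintype m] [Fintype n] [DecidableEq n] (A : Matrix m n ℝ) : ℝ :=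
  sval A 1

/-- The positive-semidefinite square root `(Aᵀ A)^{1/2}` of a Gram matrix. -/
def gramSqrt {m k : Type*} [Fintype m] [Fintype k] [DecidableEq k] (A : Matrix m k ℝ) :
    Matrix k k ℝ :=
  (Matrix.posSemidef_conjTranspose_mul_self A).1.eigenvectorUnitary.1 *
    Matrix.diagonal (Real.sqrt ∘ (Matrix.posSemidef_conjTranspose_mul_self A).1.eigenvalues) *
    (star (Matrix.posSemidef_conjTranspose_mul_self A).1.eigenvectorUnitary : Matrix k k ℝ)

/-- `(Aᵀ A)^{-1/2}`. -/
def invGramSqrt {m k : Type*} [Fintype m] [Fintype k] [DecidableEq k] (A : Matrix m k ℝ) :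
    Matrix k k ℝ :=
  (gramSqrt A)⁻¹

/-- Square root of a diagonal matrix with given (nonnegative) diagonal entries. -/
def diagSqrt {k : ℕ} (d : Fin k → ℝ) : Matrix (Fin k) (Fin k) ℝ :=
  Matrix.diagonal fun j => Real.sqrt (d j)

attribute [local instance] Matrix.frobeniusSeminormedAddCommGroup

lemma frobSq_nonneg {m n : Type*} [Fintype m] [Fintype n] (A : Matrix m n ℝ) : 0 ≤ frobSq A :=
  Finset.sum_nonneg fun _ _ => Finset.sum_nonneg fun _ _ => sq_nonneg _

lemma frob_nonneg {m n : Type*} [Fintype m] [Fintype n] (A : Matrix m n ℝ) : 0 ≤ frob A :=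
  Real.sqrt_nonneg _

lemma frob_eq_norm {m n : Type*} [Fintype m] [Fintype n] (A : Matrix m n ℝ) : frob A = ‖A‖ := by
  rw [Matrix.frobenius_norm_def, ← Real.sqrt_eq_rpow]
  unfold frob frobSq
  congr 1
  refine Finset.sum_congr rfl fun i _ => Finset.sum_congr rfl fun j _ => ?_
  rw [Real.rpow_two, Real.norm_eq_abs, sq_abs]

lemma frob_add_le {m n : Type*} [Fintype m] [Fintype n] (A B : Matrix m n ℝ) :
    frob (A + B) ≤ frob A + frob B := by
  simp only [frob_eq_norm]; exact norm_add_le _ _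

lemma frobSq_transpose {m n : Type*} [Fintype m] [Fintype n] (A : Matrix m n ℝ) :
    frobSq Aᵀ = frobSq A := by
  unfold frobSq; rw [Finset.sum_comm]; rfl

lemma frob_transpose {m n : Type*} [Fintype m] [Fintype n] (A : Matrix m n ℝ) :
    frob Aᵀ = frob A := by unfold frob; rw [frobSq_transpose]

lemma frobSq_eq_trace {m n : Type*} [Fintype m] [Fintype n] (A : Matrix m n ℝ) :
    frobSq A = (A * Aᵀ).trace := by
  simp [frobSq, Matrix.trace, Matrix.mul_apply, Matrix.diag, sq]

lemma frob_mul_orth_right {m n k : Type*} [Fintype m] [Fintype n] [Fintype k] [DecidableEq k]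
    (A : Matrix m k ℝ) (Q : Matrix n k ℝ) (hQ : Qᵀ * Q = 1) :
    frob (A * Qᵀ) = frob A := by
  unfold frob
  rw [frobSq_eq_trace, frobSq_eq_trace, Matrix.transpose_mul, Matrix.transpose_transpose,
    show A * Qᵀ * (Q * Aᵀ) = A * (Qᵀ * Q) * Aᵀ by
      rw [Matrix.mul_assoc, Matrix.mul_assoc, Matrix.mul_assoc], hQ, Matrix.mul_one]





lemma mem_svlist_nonneg {m n : Type*} [Fintype m] [Fintype n] [DecidableEq n]
    (A : Matrix m n ℝ) {x : ℝ}
    (hx : x ∈ (Finset.univ.val.map fun i =>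
      Real.sqrt ((show (Aᵀ * A).IsHermitian from Matrix.isHermitian_conjTranspose_mul_self A).eigenvalues i)).toList) : 0 ≤ x := by
  rw [Multiset.mem_toList, Multiset.mem_map] at hx
  obtain ⟨i, _, rfl⟩ := hx
  exact Real.sqrt_nonneg _

lemma spec_nonneg {m n : Type*} [Fintype m] [Fintype n] [DecidableEq n]
    (A : Matrix m n ℝ) : 0 ≤ spec A := by
  unfold spec sval
  set lst := (Finset.univ.val.map fun i =>
      Real.sqrt ((show (Aᵀ * A).IsHermitian from Matrix.isHermitian_conjTranspose_mul_self A).eigenvalues i)).toList with hlst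
  cases h : lst.insertionSort (· ≥ ·) with
  | nil => simp [h]
  | cons a t =>
    have ha : a ∈ lst := (List.perm_insertionSort (· ≥ ·) lst).mem_iff.mp (by rw [h]; simp)
    simpa [h] using mem_svlist_nonneg A ha

lemma sqrt_eig_le_spec {m n : Type*} [Fintype m] [Fintype n] [DecidableEq n]
    (A : Matrix m n ℝ) (i : n) :
    Real.sqrt ((show (Aᵀ * A).IsHermitian from Matrix.isHermitian_conjTranspose_mul_self A).eigenvalues i) ≤ spec A := by
  unfold spec sval
  set x := Real.sqrt ((show (Aᵀ * A).IsHermitian from Matrix.isHermitian_conjTranspose_mul_self A).eigenvalues i) with hx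
  set lst := (Finset.univ.val.map fun i =>
      Real.sqrt ((show (Aᵀ * A).IsHermitian from Matrix.isHermitian_conjTranspose_mul_self A).eigenvalues i)).toList with hlst
  have hmem : x ∈ lst.insertionSort (· ≥ ·) := by
    refine (List.perm_insertionSort (· ≥ ·) lst).mem_iff.mpr ?_
    rw [hlst, Multiset.mem_toList, Multiset.mem_map]
    exact ⟨i, Finset.mem_univ i, rfl⟩
  have hsorted := List.pairwise_insertionSort (· ≥ ·) lst
  cases h : lst.insertionSort (· ≥ ·) with
  | nil => rw [h] at hmem; simp at hmem
  | cons a t =>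
    rw [h] at hmem hsorted
    simp only [h, Nat.sub_self, List.getD_cons_zero]
    rcases List.mem_cons.mp hmem with he | ht
    · exact le_of_eq he
    · exact List.rel_of_pairwise_cons hsorted ht

lemma quad {m n : Type*} [Fintype m] [Fintype n] (C : Matrix m n ℝ) (w : n → ℝ) :
    (C *ᵥ w) ⬝ᵥ (C *ᵥ w) = w ⬝ᵥ ((Cᴴ * C) *ᵥ w) := by
  conv_rhs => rw [← Matrix.mulVec_mulVec, Matrix.dotProduct_mulVec, Matrix.vecMul_conjTranspose]
  simp

lemma rayleigh {m n : Type*} [Fintype m] [Fintype n] [DecidableEq n]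
    (B : Matrix m n ℝ) (v : n → ℝ) :
    (B *ᵥ v) ⬝ᵥ (B *ᵥ v) ≤ spec B ^ 2 * (v ⬝ᵥ v) := by
  have hH := (show (Bᵀ * B).IsHermitian from Matrix.isHermitian_conjTranspose_mul_self B)
  set U : Matrix n n ℝ := (hH.eigenvectorUnitary : Matrix n n ℝ) with hUdef
  have hU : U ∈ Matrix.unitaryGroup n ℝ := hH.eigenvectorUnitary.2
  have hstar : star U = Uᵀ := by
    ext i j
    simp [Matrix.star_eq_conjTranspose, Matrix.conjTranspose_apply]
  set w : n → ℝ := Uᵀ *ᵥ v with hw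
  have heig : ∀ j, hH.eigenvalues j ≤ spec B ^ 2 := by
    intro j
    have h0 : 0 ≤ hH.eigenvalues j := Matrix.eigenvalues_conjTranspose_mul_self_nonneg B j
    have := sqrt_eig_le_spec B j
    calc hH.eigenvalues j = Real.sqrt (hH.eigenvalues j) ^ 2 := (Real.sq_sqrt h0).symm
      _ ≤ spec B ^ 2 := pow_le_pow_left₀ (Real.sqrt_nonneg _) this 2
  have hww : w ⬝ᵥ w = v ⬝ᵥ v := by
    rw [hw, quad Uᵀ v]
    have h2 : Uᵀᴴ = U := by ext i j; simp [Matrix.conjTranspose_apply]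
    have : Uᵀᴴ * Uᵀ = 1 := by
      rw [h2, ← hstar]; exact (Matrix.mem_unitaryGroup_iff).mp hU
    rw [this, Matrix.one_mulVec]
  have hBB : Bᴴ * B = U * Matrix.diagonal (RCLike.ofReal ∘ hH.eigenvalues) * star U :=
    hH.spectral_theorem
  calc (B *ᵥ v) ⬝ᵥ (B *ᵥ v) = v ⬝ᵥ ((Bᴴ * B) *ᵥ v) := quad B v
    _ = v ⬝ᵥ ((U * Matrix.diagonal (RCLike.ofReal ∘ hH.eigenvalues) * Uᵀ) *ᵥ v) := by
        rw [← hstar, ← hBB]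
    _ = w ⬝ᵥ ((Matrix.diagonal (RCLike.ofReal ∘ hH.eigenvalues)) *ᵥ w) := by
        conv_lhs => rw [← Matrix.mulVec_mulVec, ← Matrix.mulVec_mulVec,
          Matrix.dotProduct_mulVec, ← Matrix.mulVec_transpose]
    _ = ∑ j, hH.eigenvalues j * w j ^ 2 := by
        simp [dotProduct, Matrix.mulVec_diagonal, sq]
        exact Finset.sum_congr rfl fun j _ => by ring
    _ ≤ ∑ j, spec B ^ 2 * w j ^ 2 :=
        Finset.sum_le_sum fun j _ => mul_le_mul_of_nonneg_right (heig j) (sq_nonneg _)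
    _ = spec B ^ 2 * (w ⬝ᵥ w) := by rw [← Finset.mul_sum]; simp [dotProduct, sq]
    _ = spec B ^ 2 * (v ⬝ᵥ v) := by rw [hww]

lemma frob_mul_transpose_le {p q n : Type*} [Fintype p] [Fintype q] [Fintype n] [DecidableEq n]
    (A : Matrix p n ℝ) (B : Matrix q n ℝ) : frob (A * Bᵀ) ≤ frob A * spec B := by
  have h1 : frobSq (A * Bᵀ) ≤ spec B ^ 2 * frobSq A := by
    unfold frobSq
    rw [Finset.mul_sum]
    refine Finset.sum_le_sum fun i _ => ?_
    calc ∑ j, ((A * Bᵀ) i j) ^ 2 = (B *ᵥ (A i)) ⬝ᵥ (B *ᵥ (A i)) := by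
          refine Finset.sum_congr rfl fun j _ => ?_
          rw [sq]
          congr 1 <;>
            exact Finset.sum_congr rfl fun k _ => by
              simp [Matrix.mul_apply, Matrix.mulVec, dotProduct, mul_comm]
      _ ≤ spec B ^ 2 * ((A i) ⬝ᵥ (A i)) := rayleigh _ _
      _ = spec B ^ 2 * ∑ j, (A i j) ^ 2 := by simp [dotProduct, sq]
  unfold frob
  calc Real.sqrt (frobSq (A * Bᵀ)) ≤ Real.sqrt (spec B ^ 2 * frobSq A) := Real.sqrt_le_sqrt h1
    _ = spec B * Real.sqrt (frobSq A) := by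
        rw [Real.sqrt_mul (sq_nonneg _), Real.sqrt_sq (spec_nonneg B)]
    _ = Real.sqrt (frobSq A) * spec B := mul_comm _ _






/-- **Lemma (factored product perturbation, Frobenius bound).** -/
theorem factored_product_perturbation
    (p1 p2 r : ℕ) (Ms : Matrix (Fin p1) (Fin p2) ℝ)
    (Us : Matrix (Fin p1) (Fin r) ℝ) (Vs : Matrix (Fin p2) (Fin r) ℝ) (Sd : Fin r → ℝ)
    (hSpos : ∀ j, 0 < Sd j)
    (hU : Usᵀ * Us = 1) (hV : Vsᵀ * Vs = 1)
    (hSVD : Ms = Us * Matrix.diagonal Sd * Vsᵀ)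
    (hrank : Ms.rank = r)
    (L : Matrix (Fin p1) (Fin r) ℝ) (R : Matrix (Fin p2) (Fin r) ℝ) :
    frob (L * Rᵀ - (Us * diagSqrt Sd) * (Vs * diagSqrt Sd)ᵀ) ≤
      (1 + 1 / 2 * max (spec ((L - Us * diagSqrt Sd) * (diagSqrt Sd)⁻¹))
          (spec ((R - Vs * diagSqrt Sd) * (diagSqrt Sd)⁻¹))) *
        (frob ((L - Us * diagSqrt Sd) * diagSqrt Sd) +
          frob ((R - Vs * diagSqrt Sd) * diagSqrt Sd)) := by
  set S12 : Matrix (Fin r) (Fin r) ℝ := diagSqrt Sd with hS12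
  set DL : Matrix (Fin p1) (Fin r) ℝ := L - Us * S12 with hDL
  set DR : Matrix (Fin p2) (Fin r) ℝ := R - Vs * S12 with hDR
  have hS12t : S12ᵀ = S12 := by rw [hS12]; exact Matrix.diagonal_transpose _
  have hS12inv : S12 * S12⁻¹ = 1 := by
    apply Matrix.mul_nonsing_inv
    rw [hS12, diagSqrt, Matrix.det_diagonal, isUnit_iff_ne_zero]
    exact Finset.prod_ne_zero_iff.mpr fun j _ =>
      ne_of_gt (Real.sqrt_pos.mpr (hSpos j))
  have hS12invt : (S12⁻¹)ᵀ = S12⁻¹ := by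
    rw [Matrix.transpose_nonsing_inv, hS12t]
  -- decomposition
  have hdecomp : L * Rᵀ - (Us * S12) * (Vs * S12)ᵀ =
      (DL * (Vs * S12)ᵀ + (Us * S12) * DRᵀ) + DL * DRᵀ := by
    rw [hDL, hDR, Matrix.transpose_sub]
    simp only [Matrix.sub_mul, Matrix.mul_sub]
    abel
  -- term 1
  have eq1 : frob (DL * (Vs * S12)ᵀ) = frob (DL * S12) := by
    rw [show DL * (Vs * S12)ᵀ = (DL * S12) * Vsᵀ by
      rw [Matrix.transpose_mul, hS12t, ← Matrix.mul_assoc]]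
    exact frob_mul_orth_right _ Vs hV
  -- term 2
  have eq2 : frob ((Us * S12) * DRᵀ) = frob (DR * S12) := by
    rw [show (Us * S12) * DRᵀ = ((DR * S12) * Usᵀ)ᵀ by
      rw [Matrix.transpose_mul, Matrix.transpose_mul, Matrix.transpose_transpose, hS12t,
        Matrix.mul_assoc]]
    rw [frob_transpose]
    exact frob_mul_orth_right _ Us hU
  -- term 3
  have h3a : (DL * S12) * (DR * S12⁻¹)ᵀ = DL * DRᵀ := by
    rw [Matrix.transpose_mul, hS12invt,
      show DL * S12 * (S12⁻¹ * DRᵀ) = DL * (S12 * S12⁻¹) * DRᵀ from by simp only [Matrix.mul_assoc],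
      hS12inv, Matrix.mul_one]
  have h3b : (DR * S12) * (DL * S12⁻¹)ᵀ = DR * DLᵀ := by
    rw [Matrix.transpose_mul, hS12invt,
      show DR * S12 * (S12⁻¹ * DLᵀ) = DR * (S12 * S12⁻¹) * DLᵀ from by simp only [Matrix.mul_assoc],
      hS12inv, Matrix.mul_one]
  have e3a : frob (DL * DRᵀ) ≤ frob (DL * S12) * spec (DR * S12⁻¹) := by
    rw [← h3a]; exact frob_mul_transpose_le _ _
  have e3b : frob (DL * DRᵀ) ≤ frob (DR * S12) * spec (DL * S12⁻¹) := by
    rw [show DL * DRᵀ = ((DR * S12) * (DL * S12⁻¹)ᵀ)ᵀ from by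
      rw [h3b, Matrix.transpose_mul, Matrix.transpose_transpose]]
    rw [frob_transpose]
    exact frob_mul_transpose_le _ _
  set fL := frob (DL * S12) with hfL
  set fR := frob (DR * S12) with hfR
  set sL := spec (DL * S12⁻¹) with hsL
  set sR := spec (DR * S12⁻¹) with hsR
  have fL0 : 0 ≤ fL := frob_nonneg _
  have fR0 : 0 ≤ fR := frob_nonneg _
  have p1 : fL * sR ≤ fL * max sL sR :=
    mul_le_mul_of_nonneg_left (le_max_right _ _) fL0
  have p2 : fR * sL ≤ fR * max sL sR :=
    mul_le_mul_of_nonneg_left (le_max_left _ _) fR0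
  calc frob (L * Rᵀ - Us * S12 * (Vs * S12)ᵀ)
      = frob ((DL * (Vs * S12)ᵀ + (Us * S12) * DRᵀ) + DL * DRᵀ) := by rw [hdecomp]
    _ ≤ frob (DL * (Vs * S12)ᵀ + (Us * S12) * DRᵀ) + frob (DL * DRᵀ) := frob_add_le _ _
    _ ≤ (frob (DL * (Vs * S12)ᵀ) + frob ((Us * S12) * DRᵀ)) + frob (DL * DRᵀ) :=
        add_le_add_left (frob_add_le _ _) _
    _ = (fL + fR) + frob (DL * DRᵀ) := by rw [eq1, eq2]
    _ ≤ (fL + fR) + (fL * max sL sR + fR * max sL sR) / 2 := by linarith [e3a, e3b, p1, p2]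
    _ = (1 + 1 / 2 * max sL sR) * (fL + fR) := by ring

end HomoPursuit
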